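/- Let L be a laminar family of subsets of a finite ground set E (any two members are nested or disjoint), with a positive capacity C_v assigned to each member. Define f(S) for S ⊆ E as the minimum over antichains A ⊆ L whose union covers S of the sum of capacities of members of A (and f(S) = +∞ treated as excluded when no such antichain exists; assume the full ground set is a member of L so covers always exist). Then f is normalized (f(∅)=0), monotone, and submodular. -/

import Mathlib

/-- **Laminar rank function is normalized, monotone, submodular.**
`L` is a laminar family on finite ground set `E` with positive capacities `C`,
containing the full ground set; `f S` is the infimum over antichains `A ⊆ L`
covering `S` of the total capacity of `A`. -/
theorem laminar_rank_normalized_monotone_submodular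
    (E : Type) [Fintype E] [DecidableEq E]
    (L : Finset (Finset E))
    (hlam : ∀ X ∈ L, ∀ Y ∈ L, X ⊆ Y ∨ Y ⊆ X ∨ X ∩ Y = ∅)
    (C : Finset E → ℝ) (hC : ∀ X ∈ L, 0 < C X)
    (huniv : Finset.univ ∈ L)
    (f : Finset E → ℝ)
    (hf : ∀ S : Finset E, f S = sInf {x : ℝ | ∃ A : Finset (Finset E),
        A ⊆ L ∧ (∀ X ∈ A, ∀ Y ∈ A, X ≠ Y → ¬ X ⊆ Y ∧ ¬ Y ⊆ X) ∧
        S ⊆ A.biUnion id ∧ x = ∑ X ∈ A, C X}) :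
    f ∅ = 0 ∧
    (∀ S T : Finset E, S ⊆ T → f S ≤ f T) ∧
    (∀ S T : Finset E, f (S ∪ T) + f (S ∩ T) ≤ f S + f T) := by
  classical
  set P : Finset E → Set ℝ := fun S => {x : ℝ | ∃ A : Finset (Finset E),
      A ⊆ L ∧ (∀ X ∈ A, ∀ Y ∈ A, X ≠ Y → ¬ X ⊆ Y ∧ ¬ Y ⊆ X) ∧
      S ⊆ A.biUnion id ∧ x = ∑ X ∈ A, C X} with hP
  have hfin : ∀ S, (P S).Finite := by
    intro S
    apply Set.Finite.subset (Set.finite_range (fun A : Finset (Finset E) => ∑ X ∈ A, C X))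
    rintro x ⟨A, -, -, -, rfl⟩
    exact ⟨A, rfl⟩
  have hne : ∀ S, (P S).Nonempty := by
    intro S
    refine ⟨C Finset.univ, {Finset.univ}, ?_, ?_, ?_, ?_⟩
    · simpa using huniv
    · intro X hX Y hY hXY
      simp only [Finset.mem_singleton] at hX hY
      exact absurd (hX.trans hY.symm) hXY
    · intro e he; simp
    · simp
  have hbdd : ∀ S, BddBelow (P S) := fun S => (hfin S).bddBelow
  have hnonneg : ∀ S, ∀ x ∈ P S, (0:ℝ) ≤ x := by
    rintro S x ⟨A, hAL, -, -, rfl⟩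
    exact Finset.sum_nonneg fun X hX => (hC X (hAL hX)).le
  -- laminarity: two members sharing a point are nested
  have hlam' : ∀ X ∈ L, ∀ Y ∈ L, ∀ e : E, e ∈ X → e ∈ Y → X ⊆ Y ∨ Y ⊆ X := by
    intro X hX Y hY e heX heY
    rcases hlam X hX Y hY with h | h | h
    · exact Or.inl h
    · exact Or.inr h
    · exact absurd (Finset.mem_inter.2 ⟨heX, heY⟩) (by simp [h])
  refine ⟨?_, ?_, ?_⟩
  · -- normalized
    have h0 : (0:ℝ) ∈ P ∅ := ⟨∅, by simp, by simp, by simp, by simp⟩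
    have h1 : f ∅ ≤ 0 := by rw [hf]; exact csInf_le (hbdd ∅) h0
    have h2 : (0:ℝ) ≤ f ∅ := by rw [hf]; exact le_csInf (hne ∅) (hnonneg ∅)
    linarith
  · -- monotone
    intro S T hST
    rw [hf, hf]
    apply csInf_le_csInf (hbdd S) (hne T)
    rintro x ⟨A, h1, h2, h3, h4⟩
    exact ⟨A, h1, h2, hST.trans h3, h4⟩
  · -- submodular
    intro S T
    have hS : f S ∈ P S := by rw [hf]; exact (hne S).csInf_mem (hfin S)
    have hT : f T ∈ P T := by rw [hf]; exact (hne T).csInf_mem (hfin T)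
    obtain ⟨A, hAL, hAac, hAcov, hAsum⟩ := hS
    obtain ⟨B, hBL, hBac, hBcov, hBsum⟩ := hT
    set U := A ∪ B with hU
    have hUL : U ⊆ L := Finset.union_subset hAL hBL
    set D := U.filter (fun X => ∀ Y ∈ U, X ⊆ Y → X = Y) with hD
    set K := (U \ D) ∪ (A ∩ B) with hK
    have hKL : K ⊆ L := by
      intro X hX
      rcases Finset.mem_union.1 hX with h | h
      · exact hUL (Finset.mem_sdiff.1 h).1
      · exact hAL (Finset.mem_inter.1 h).1
    set A' := K.filter (fun W => ∃ e ∈ S ∩ T, e ∈ W ∧ ∀ Z ∈ K, e ∈ Z → Z ⊆ W) with hA'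
    have hDL : D ⊆ L := (Finset.filter_subset _ _).trans hUL
    have hA'L : A' ⊆ L := (Finset.filter_subset _ _).trans hKL
    -- D is an antichain
    have hDac : ∀ X ∈ D, ∀ Y ∈ D, X ≠ Y → ¬ X ⊆ Y ∧ ¬ Y ⊆ X := by
      intro X hX Y hY hXY
      obtain ⟨hXU, hXm⟩ := Finset.mem_filter.1 hX
      obtain ⟨hYU, hYm⟩ := Finset.mem_filter.1 hY
      exact ⟨fun h => hXY (hXm Y hYU h), fun h => hXY.symm (hYm X hXU h)⟩
    -- D covers S ∪ T
    have hDcov : S ∪ T ⊆ D.biUnion id := by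
      intro e he
      have : ∃ X ∈ U, e ∈ X := by
        rcases Finset.mem_union.1 he with h | h
        · obtain ⟨X, hX, heX⟩ := Finset.mem_biUnion.1 (hAcov h)
          exact ⟨X, Finset.mem_union_left _ hX, heX⟩
        · obtain ⟨X, hX, heX⟩ := Finset.mem_biUnion.1 (hBcov h)
          exact ⟨X, Finset.mem_union_right _ hX, heX⟩
      obtain ⟨X, hXU, heX⟩ := this
      obtain ⟨Y, hY, hYmax⟩ : ∃ Y ∈ U.filter (fun Z => X ⊆ Z),
          ∀ Z ∈ U.filter (fun Z => X ⊆ Z), ¬ Y < Z := by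
        obtain ⟨Y, hY⟩ := Finset.exists_maximal (s := U.filter (fun Z => X ⊆ Z))
          ⟨X, Finset.mem_filter.2 ⟨hXU, Finset.Subset.refl X⟩⟩
        exact ⟨Y, hY.1, fun Z hZ hlt => lt_irrefl _ (hlt.trans_le (hY.2 hZ hlt.le))⟩
      obtain ⟨hYU, hXY⟩ := Finset.mem_filter.1 hY
      have hYD : Y ∈ D := by
        refine Finset.mem_filter.2 ⟨hYU, ?_⟩
        intro Z hZU hYZ
        by_contra hne'
        exact hYmax Z (Finset.mem_filter.2 ⟨hZU, hXY.trans hYZ⟩) (lt_of_le_of_ne hYZ hne')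
      exact Finset.mem_biUnion.2 ⟨Y, hYD, hXY heX⟩
    -- A' is an antichain
    have hA'ac : ∀ X ∈ A', ∀ Y ∈ A', X ≠ Y → ¬ X ⊆ Y ∧ ¬ Y ⊆ X := by
      intro X hX Y hY hXY
      obtain ⟨hXK, e1, -, he1X, hXmax⟩ := Finset.mem_filter.1 hX
      obtain ⟨hYK, e2, -, he2Y, hYmax⟩ := Finset.mem_filter.1 hY
      constructor
      · intro h
        exact hXY (Finset.Subset.antisymm h (hXmax Y hYK (h he1X)))
      · intro h
        exact hXY (Finset.Subset.antisymm (hYmax X hXK (h he2Y)) h)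
    -- A' covers S ∩ T
    have hA'cov : S ∩ T ⊆ A'.biUnion id := by
      intro e he
      obtain ⟨heS, heT⟩ := Finset.mem_inter.1 he
      obtain ⟨X, hXA, heX⟩ := Finset.mem_biUnion.1 (hAcov heS)
      obtain ⟨Y, hYB, heY⟩ := Finset.mem_biUnion.1 (hBcov heT)
      -- there is some W ∈ K containing e
      have hWex : ∃ W ∈ K, e ∈ W := by
        rcases hlam' X (hAL hXA) Y (hBL hYB) e heX heY with hXY | hYX
        · by_cases hEq : X = Y
          · exact ⟨X, Finset.mem_union_right _ (Finset.mem_inter.2 ⟨hXA, hEq ▸ hYB⟩), heX⟩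
          · refine ⟨X, Finset.mem_union_left _ (Finset.mem_sdiff.2
              ⟨Finset.mem_union_left _ hXA, ?_⟩), heX⟩
            intro hXD
            exact hEq ((Finset.mem_filter.1 hXD).2 Y (Finset.mem_union_right _ hYB) hXY)
        · by_cases hEq : Y = X
          · exact ⟨Y, Finset.mem_union_right _ (Finset.mem_inter.2 ⟨hEq ▸ hXA, hYB⟩), heY⟩
          · refine ⟨Y, Finset.mem_union_left _ (Finset.mem_sdiff.2
              ⟨Finset.mem_union_right _ hYB, ?_⟩), heY⟩
            intro hYD
            exact hEq ((Finset.mem_filter.1 hYD).2 X (Finset.mem_union_left _ hXA) hYX)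
      obtain ⟨M, hM, hMmax⟩ : ∃ M ∈ K.filter (fun Z => e ∈ Z),
          ∀ Z ∈ K.filter (fun Z => e ∈ Z), ¬ M < Z := by
        obtain ⟨M, hM⟩ := Finset.exists_maximal (s := K.filter (fun Z => e ∈ Z))
          (by obtain ⟨W, hWK, heW⟩ := hWex; exact ⟨W, Finset.mem_filter.2 ⟨hWK, heW⟩⟩)
        exact ⟨M, hM.1, fun Z hZ hlt => lt_irrefl _ (hlt.trans_le (hM.2 hZ hlt.le))⟩
      obtain ⟨hMK, heM⟩ := Finset.mem_filter.1 hM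
      refine Finset.mem_biUnion.2 ⟨M, Finset.mem_filter.2 ⟨hMK, e, he, heM, ?_⟩, heM⟩
      intro Z hZK heZ
      rcases hlam' Z (hKL hZK) M (hKL hMK) e heZ heM with h | h
      · exact h
      · by_contra hnot
        have : M ≠ Z := fun hEq => hnot (hEq ▸ Finset.Subset.refl M)
        exact hMmax Z (Finset.mem_filter.2 ⟨hZK, heZ⟩) (lt_of_le_of_ne h this)
    -- cost bounds
    have hfST1 : f (S ∪ T) ≤ ∑ X ∈ D, C X := by
      rw [hf]; exact csInf_le (hbdd _) ⟨D, hDL, hDac, hDcov, rfl⟩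
    have hfST2 : f (S ∩ T) ≤ ∑ X ∈ A', C X := by
      rw [hf]; exact csInf_le (hbdd _) ⟨A', hA'L, hA'ac, hA'cov, rfl⟩
    have hsum1 : ∑ X ∈ U, C X + ∑ X ∈ A ∩ B, C X = ∑ X ∈ A, C X + ∑ X ∈ B, C X :=
      Finset.sum_union_inter
    have hsum2 : ∑ X ∈ U \ D, C X + ∑ X ∈ D, C X = ∑ X ∈ U, C X :=
      Finset.sum_sdiff (Finset.filter_subset _ _)
    have hsum3 : ∑ X ∈ A', C X ≤ ∑ X ∈ K, C X :=
      Finset.sum_le_sum_of_subset_of_nonneg (Finset.filter_subset _ _)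
        (fun X hX _ => (hC X (hKL hX)).le)
    have hsum4 : ∑ X ∈ K, C X ≤ ∑ X ∈ U \ D, C X + ∑ X ∈ A ∩ B, C X := by
      have h := Finset.sum_union_inter (s₁ := U \ D) (s₂ := A ∩ B) (f := C)
      have hpos : (0:ℝ) ≤ ∑ X ∈ (U \ D) ∩ (A ∩ B), C X :=
        Finset.sum_nonneg fun X hX =>
          (hC X (hUL (Finset.mem_sdiff.1 (Finset.mem_inter.1 hX).1).1)).le
      linarith
    linarith [hAsum, hBsum]
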